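/- For positive reals M, J_e, K_e, D_e, the rational function Y(s) = (J_e s² + D_e s + K_e) / (s[J_e M s² + D_e (J_e + M) s + K_e (J_e + M)]) is positive real: Re Y(s) ≥ 0 for all complex s with Re s > 0. -/

import Mathlib

/-- The closed-loop admittance
Y(s) = (Jₑ s² + Dₑ s + Kₑ) / (s (Jₑ M s² + Dₑ(Jₑ+M) s + Kₑ(Jₑ+M)))
is positive real: Re Y(s) ≥ 0 whenever Re s > 0. -/
theorem admittance_positive_real
    (M Je Ke De : ℝ) (hM : 0 < M) (hJe : 0 < Je) (hKe : 0 < Ke) (hDe : 0 < De) :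
    ∀ s : ℂ, 0 < s.re →
      0 ≤ (((Je : ℂ) * s ^ 2 + (De : ℂ) * s + (Ke : ℂ)) /
        (s * ((Je : ℂ) * (M : ℂ) * s ^ 2 + (De : ℂ) * ((Je : ℂ) + (M : ℂ)) * s
          + (Ke : ℂ) * ((Je : ℂ) + (M : ℂ))))).re := by
  intro s hs
  have hs0 : s ≠ 0 := by
    intro h; rw [h] at hs; simp at hs
  set b : ℂ := (De : ℂ) * s + (Ke : ℂ) with hb
  have hbre : 0 < b.re := by
    simp only [hb, Complex.add_re, Complex.mul_re, Complex.ofReal_re,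
      Complex.ofReal_im]
    nlinarith
  have hb0 : b ≠ 0 := fun h => by rw [h] at hbre; simp at hbre
  set a : ℂ := (Je : ℂ) * s with ha
  have ha0 : a ≠ 0 := by
    refine mul_ne_zero ?_ hs0
    exact_mod_cast hJe.ne'
  have hainv : 0 < (a⁻¹).re := by
    rw [Complex.inv_re]
    refine div_pos ?_ (Complex.normSq_pos.mpr ha0)
    simp only [ha, Complex.mul_re, Complex.ofReal_re, Complex.ofReal_im]
    nlinarith
  have hsb : 0 < (s / b).re := by
    rw [Complex.div_re]
    have h1 : b.re = De * s.re + Ke := by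
      simp [hb, Complex.add_re, Complex.mul_re]
    have h2 : b.im = De * s.im := by
      simp [hb, Complex.add_im, Complex.mul_im]
    have hns : 0 < Complex.normSq b := Complex.normSq_pos.mpr hb0
    rw [h1, h2]
    rw [← add_div]
    refine div_pos ?_ hns
    nlinarith [sq_nonneg s.im]
  set w : ℂ := a⁻¹ + s / b with hw
  have hwre : 0 < w.re := by
    rw [hw, Complex.add_re]; linarith
  have hw0 : w ≠ 0 := fun h => by rw [h] at hwre; simp at hwre
  set N : ℂ := (Je : ℂ) * s ^ 2 + (De : ℂ) * s + (Ke : ℂ) with hN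
  have hwN : w = N / (a * b) := by
    rw [hw, hN, ha, hb]
    have h1 : (De : ℂ) * s + (Ke : ℂ) ≠ 0 := hb0
    have h2 : (Je : ℂ) ≠ 0 := by exact_mod_cast hJe.ne'
    rw [inv_eq_one_div, div_add_div _ _ (mul_ne_zero h2 hs0) h1]
    ring
  have hN0 : N ≠ 0 := by
    intro h
    rw [hwN, h, zero_div] at hw0
    exact hw0 rfl
  set D' : ℂ := (Je : ℂ) * (M : ℂ) * s ^ 2 + (De : ℂ) * ((Je : ℂ) + (M : ℂ)) * s
      + (Ke : ℂ) * ((Je : ℂ) + (M : ℂ)) with hD'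
  have hZ : (M : ℂ) * s + w⁻¹ = (s * D') / N := by
    rw [hwN, inv_div, hN, hD', ha, hb]
    have h3 : (Je : ℂ) * s ^ 2 + (De : ℂ) * s + (Ke : ℂ) ≠ 0 := hN0
    rw [eq_div_iff h3, add_mul, div_mul_cancel₀ _ h3]
    ring
  have hkey : N / (s * D') = ((M : ℂ) * s + w⁻¹)⁻¹ := by
    rw [hZ, inv_div]
  rw [hkey, Complex.inv_re]
  refine div_nonneg ?_ (Complex.normSq_nonneg _)
  rw [Complex.add_re, Complex.mul_re]
  have hwinv : 0 ≤ (w⁻¹).re := by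
    rw [Complex.inv_re]
    exact div_nonneg hwre.le (Complex.normSq_nonneg _)
  simp only [Complex.ofReal_re, Complex.ofReal_im]
  nlinarith
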